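/- Let X be a Banach space with norm ‖·‖, let [u,v] := inf_{λ>0}(‖u+λv‖−‖u‖)/λ, and let A ⊆ X×X satisfy [u−û, v−v̂] + ω‖u−û‖ ≥ 0 for all (u,v),(û,v̂) ∈ A (A is accretive of type ω). Suppose h, ĥ > 0, and u₀,u₁,û₀,û₁,f,f̂ ∈ X satisfy (u₁, f − (u₁−u₀)/h) ∈ A and (û₁, f̂ − (û₁−û₀)/ĥ) ∈ A. Then (1 − min(h,ĥ)·ω)·‖u₁−û₁‖ ≤ (1 − ĥ/h)⁺‖u₁−û₀‖ + (1 − h/ĥ)⁺‖u₀−û₁‖ + (min(h,ĥ)/max(h,ĥ))‖u₀−û₀‖ + min(h,ĥ)·[u₁−û₁, f−f̂]. -/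

import Mathlib

private lemma euler_bddBelow_aux {X : Type*} [NormedAddCommGroup X] [NormedSpace ℝ X]
    (w v : X) :
    BddBelow ((fun l : ℝ => (‖w + l • v‖ - ‖w‖) / l) '' Set.Ioi 0) := by
  refine ⟨-‖v‖, ?_⟩
  rintro x ⟨l, hl, rfl⟩
  rw [Set.mem_Ioi] at hl
  rw [le_div_iff₀ hl]
  have h1 : ‖w‖ - ‖w + l • v‖ ≤ ‖l • v‖ := by
    have := norm_sub_norm_le w (w + l • v)
    simpa using this
  rw [norm_smul, Real.norm_eq_abs, abs_of_pos hl] at h1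
  nlinarith

private lemma euler_nonempty_aux {X : Type*} [NormedAddCommGroup X] [NormedSpace ℝ X]
    (w v : X) :
    ((fun l : ℝ => (‖w + l • v‖ - ‖w‖) / l) '' Set.Ioi 0).Nonempty :=
  ⟨_, ⟨1, by norm_num, rfl⟩⟩

private lemma euler_key {X : Type*} [NormedAddCommGroup X] [NormedSpace ℝ X]
    (w z Y : X) (b : ℝ) (hb : 0 < b) :
    sInf ((fun l : ℝ => (‖w + l • (z + Y - b • w)‖ - ‖w‖) / l) '' Set.Ioi 0)
      ≤ sInf ((fun l : ℝ => (‖w + l • z‖ - ‖w‖) / l) '' Set.Ioi 0) + ‖Y‖ - b * ‖w‖ := by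
  have main : ∀ μ : ℝ, 0 < μ →
      sInf ((fun l : ℝ => (‖w + l • (z + Y - b • w)‖ - ‖w‖) / l) '' Set.Ioi 0)
        ≤ (‖w + μ • z‖ - ‖w‖) / μ + ‖Y‖ - b * ‖w‖ := by
    intro μ hμ
    have hc : (0:ℝ) < 1 + μ * b := by positivity
    set l : ℝ := μ / (1 + μ * b) with hl
    have hlpos : 0 < l := by positivity
    have step := csInf_le (euler_bddBelow_aux w (z + Y - b • w))
      ⟨l, Set.mem_Ioi.2 hlpos, rfl⟩
    refine step.trans ?_
    have hvec : w + l • (z + Y - b • w)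
        = (1/(1 + μ * b)) • (w + μ • z) + l • Y := by
      rw [hl]
      match_scalars <;> field_simp <;> ring
    have hnorm : ‖w + l • (z + Y - b • w)‖
        ≤ (1/(1 + μ * b)) * ‖w + μ • z‖ + l * ‖Y‖ := by
      rw [hvec]
      refine (norm_add_le _ _).trans ?_
      rw [norm_smul, norm_smul, Real.norm_eq_abs, Real.norm_eq_abs,
        abs_of_pos (by positivity), abs_of_pos hlpos]
    have heq : ((1/(1 + μ * b)) * ‖w + μ • z‖ + l * ‖Y‖ - ‖w‖) / l
        = (‖w + μ • z‖ - ‖w‖) / μ + ‖Y‖ - b * ‖w‖ := by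
      rw [hl]
      field_simp
      ring
    calc (‖w + l • (z + Y - b • w)‖ - ‖w‖) / l
        ≤ ((1/(1 + μ * b)) * ‖w + μ • z‖ + l * ‖Y‖ - ‖w‖) / l := by
          apply div_le_div_of_nonneg_right ?_ hlpos.le
          · linarith
      _ = _ := heq
  have h2 : sInf ((fun l : ℝ => (‖w + l • (z + Y - b • w)‖ - ‖w‖) / l) '' Set.Ioi 0)
      - ‖Y‖ + b * ‖w‖
      ≤ sInf ((fun l : ℝ => (‖w + l • z‖ - ‖w‖) / l) '' Set.Ioi 0) := by
    refine le_csInf (euler_nonempty_aux w z) ?_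
    rintro x ⟨μ, hμ, rfl⟩
    rw [Set.mem_Ioi] at hμ
    have := main μ hμ
    linarith
  linarith

private lemma euler_aux {X : Type*} [NormedAddCommGroup X] [NormedSpace ℝ X]
    (bracket : X → X → ℝ)
    (hbracket : ∀ u v : X,
      bracket u v = sInf ((fun l : ℝ => (‖u + l • v‖ - ‖u‖) / l) '' Set.Ioi 0))
    (ω : ℝ) (A : Set (X × X))
    (hA : ∀ p ∈ A, ∀ q ∈ A,
      bracket (p.1 - q.1) (p.2 - q.2) + ω * ‖p.1 - q.1‖ ≥ 0)
    (h h' : ℝ) (hh : 0 < h) (hh' : 0 < h') (hle : h' ≤ h)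
    (u₀ u₁ v₀ v₁ f f' : X)
    (hu : (u₁, f - h⁻¹ • (u₁ - u₀)) ∈ A)
    (hv : (v₁, f' - h'⁻¹ • (v₁ - v₀)) ∈ A) :
    (1 - h' * ω) * ‖u₁ - v₁‖ ≤
      (1 - h' / h) * ‖u₁ - v₀‖ + (h' / h) * ‖u₀ - v₀‖ +
        h' * bracket (u₁ - v₁) (f - f') := by
  have hab : h⁻¹ ≤ h'⁻¹ := by
    apply inv_anti₀ hh' hle
  have hbr := hA _ hu _ hv
  simp only at hbr
  have hVeq : (f - h⁻¹ • (u₁ - u₀)) - (f' - h'⁻¹ • (v₁ - v₀))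
      = (f - f') + ((h'⁻¹ - h⁻¹) • (u₁ - v₀) + h⁻¹ • (u₀ - v₀)) - h'⁻¹ • (u₁ - v₁) := by
    module
  rw [hVeq] at hbr
  have hkey : bracket (u₁ - v₁)
        ((f - f') + ((h'⁻¹ - h⁻¹) • (u₁ - v₀) + h⁻¹ • (u₀ - v₀)) - h'⁻¹ • (u₁ - v₁))
      ≤ bracket (u₁ - v₁) (f - f')
        + ‖(h'⁻¹ - h⁻¹) • (u₁ - v₀) + h⁻¹ • (u₀ - v₀)‖ - h'⁻¹ * ‖u₁ - v₁‖ := by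
    simp only [hbracket]
    exact euler_key _ _ _ _ (by positivity)
  have hYn : ‖(h'⁻¹ - h⁻¹) • (u₁ - v₀) + h⁻¹ • (u₀ - v₀)‖
      ≤ (h'⁻¹ - h⁻¹) * ‖u₁ - v₀‖ + h⁻¹ * ‖u₀ - v₀‖ := by
    refine (norm_add_le _ _).trans ?_
    rw [norm_smul, norm_smul, Real.norm_eq_abs, Real.norm_eq_abs,
      abs_of_nonneg (by linarith), abs_of_nonneg (by positivity)]
  have h1 : h'⁻¹ * ‖u₁ - v₁‖
      ≤ bracket (u₁ - v₁) (f - f')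
        + ((h'⁻¹ - h⁻¹) * ‖u₁ - v₀‖ + h⁻¹ * ‖u₀ - v₀‖) + ω * ‖u₁ - v₁‖ := by
    linarith
  have h2 := mul_le_mul_of_nonneg_left h1 hh'.le
  have e1 : h' * (h'⁻¹ * ‖u₁ - v₁‖) = ‖u₁ - v₁‖ := by
    field_simp
  have e5 : h' * h'⁻¹ * ‖u₁ - v₀‖ = ‖u₁ - v₀‖ := by
    rw [mul_inv_cancel₀ hh'.ne', one_mul]
  simp only [div_eq_mul_inv]
  linarith [h2, e1, e5]

private lemma euler_bracket_neg {X : Type*} [NormedAddCommGroup X] [NormedSpace ℝ X]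
    (bracket : X → X → ℝ)
    (hbracket : ∀ u v : X,
      bracket u v = sInf ((fun l : ℝ => (‖u + l • v‖ - ‖u‖) / l) '' Set.Ioi 0))
    (p q : X) : bracket (-p) (-q) = bracket p q := by
  rw [hbracket, hbracket]
  congr 1
  apply Set.image_congr
  intro l _
  simp only [smul_neg, ← neg_add, norm_neg]

theorem euler_step_comparison {X : Type*} [NormedAddCommGroup X] [NormedSpace ℝ X]
    (bracket : X → X → ℝ)
    (hbracket : ∀ u v : X,
      bracket u v = sInf ((fun l : ℝ => (‖u + l • v‖ - ‖u‖) / l) '' Set.Ioi 0))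
    (ω : ℝ) (A : Set (X × X))
    (hA : ∀ p ∈ A, ∀ q ∈ A,
      bracket (p.1 - q.1) (p.2 - q.2) + ω * ‖p.1 - q.1‖ ≥ 0)
    (h h' : ℝ) (hh : 0 < h) (hh' : 0 < h')
    (u₀ u₁ v₀ v₁ f f' : X)
    (hu : (u₁, f - h⁻¹ • (u₁ - u₀)) ∈ A)
    (hv : (v₁, f' - h'⁻¹ • (v₁ - v₀)) ∈ A) :
    (1 - min h h' * ω) * ‖u₁ - v₁‖ ≤
      max (1 - h' / h) 0 * ‖u₁ - v₀‖ + max (1 - h / h') 0 * ‖u₀ - v₁‖ +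
        (min h h' / max h h') * ‖u₀ - v₀‖ +
        min h h' * bracket (u₁ - v₁) (f - f') := by
  rcases le_total h' h with hle | hle
  · have H := euler_aux bracket hbracket ω A hA h h' hh hh' hle u₀ u₁ v₀ v₁ f f' hu hv
    have c1 : max (1 - h' / h) 0 = 1 - h' / h := by
      apply max_eq_left
      have : h' / h ≤ 1 := (div_le_one hh).2 hle
      linarith
    have c2 : max (1 - h / h') 0 = 0 := by
      apply max_eq_right
      have : 1 ≤ h / h' := (one_le_div hh').2 hle
      linarith
    rw [min_eq_right hle, max_eq_left hle, c1, c2]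
    linarith
  · have H := euler_aux bracket hbracket ω A hA h' h hh' hh hle v₀ v₁ u₀ u₁ f' f hv hu
    have c1 : max (1 - h' / h) 0 = 0 := by
      apply max_eq_right
      have : 1 ≤ h' / h := (one_le_div hh).2 hle
      linarith
    have c2 : max (1 - h / h') 0 = 1 - h / h' := by
      apply max_eq_left
      have : h / h' ≤ 1 := (div_le_one hh').2 hle
      linarith
    have hb : bracket (v₁ - u₁) (f' - f) = bracket (u₁ - v₁) (f - f') := by
      have := euler_bracket_neg bracket hbracket (u₁ - v₁) (f - f')
      simpa [neg_sub] using this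
    rw [norm_sub_rev v₁ u₁, norm_sub_rev v₁ u₀, norm_sub_rev v₀ u₀, hb] at H
    rw [min_eq_left hle, max_eq_right hle, c1, c2]
    linarith
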